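/- Let h : ℝⁿ → ℝ be a C¹ weak CBF: C = {x | h(x) ≥ 0} is compact, h = 0 on ∂C, ∇h ≠ 0 on ∂C, the CBF condition holds on C, but for every open set D containing C the CBF condition fails at some point of D. Then there exists ȳ ∈ ∂C with ∇h(ȳ)·f(ȳ) = 0 and ∇h(ȳ)G(ȳ) = 0, i.e., Z_h ≠ ∅. -/

import Mathlib

open scoped RealInnerProductSpace
open Set

theorem stmt_10 (n m : ℕ) (h : EuclideanSpace ℝ (Fin n) → ℝ)
    (f : EuclideanSpace ℝ (Fin n) → EuclideanSpace ℝ (Fin n))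
    (G : EuclideanSpace ℝ (Fin n) → Fin m → EuclideanSpace ℝ (Fin n))
    (α : ℝ → ℝ) (hα : StrictMono α) (hα0 : α 0 = 0)
    (hfcont : Continuous f) (hGcont : Continuous G)
    (hC1 : ContDiff ℝ 1 h)
    (C : Set (EuclideanSpace ℝ (Fin n))) (hC : C = {x | 0 ≤ h x})
    (hcomp : IsCompact C)
    (hzero : ∀ x ∈ frontier C, h x = 0)
    (hgrad : ∀ x ∈ frontier C, gradient h x ≠ 0)
    (hcbf : ∀ x ∈ C, ∃ u : Fin m → ℝ,
      0 ≤ ⟪gradient h x, f x⟫ + α (h x) + ∑ i, ⟪gradient h x, G x i⟫ * u i)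
    (hweak : ∀ D : Set (EuclideanSpace ℝ (Fin n)), IsOpen D → C ⊆ D →
      ∃ x ∈ D, ∀ β : ℝ → ℝ, StrictMono β → β 0 = 0 → ∀ u : Fin m → ℝ,
        ⟪gradient h x, f x⟫ + β (h x) + ∑ i, ⟪gradient h x, G x i⟫ * u i < 0) :
    ∃ y ∈ frontier C, ⟪gradient h y, f y⟫ = 0 ∧ ∀ i, ⟪gradient h y, G y i⟫ = 0 := by
  classical
  have hCclosed : IsClosed C := by
    rw [hC]; exact isClosed_le continuous_const hC1.continuous
  have hgradcont : Continuous (gradient h) := by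
    have h1 : Continuous (fderiv ℝ h) := hC1.continuous_fderiv one_ne_zero
    exact ((InnerProductSpace.toDual ℝ
      (EuclideanSpace ℝ (Fin n))).symm.continuous.comp h1 : _)
  by_cases hne : C.Nonempty
  swap
  · obtain ⟨x, hx, -⟩ := hweak ∅ isOpen_empty
      (by simp [not_nonempty_iff_eq_empty.mp hne])
    exact absurd hx (by simp)
  -- build the sequence
  have hseq : ∀ k : ℕ, ∃ x : EuclideanSpace ℝ (Fin n),
      Metric.infDist x C < 1/(k+1) ∧ x ∉ C ∧
      (∀ i, ⟪gradient h x, G x i⟫ = 0) ∧ ⟪gradient h x, f x⟫ + h x < 0 := by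
    intro k
    have hδ : (0:ℝ) < 1/(k+1) := by positivity
    obtain ⟨x, hxD, hxfail⟩ := hweak (Metric.thickening (1/(k+1)) C)
      Metric.isOpen_thickening (Metric.self_subset_thickening hδ C)
    have hxnC : x ∉ C := by
      intro hxC
      obtain ⟨u, hu⟩ := hcbf x hxC
      exact absurd (hxfail α hα hα0 u) (not_lt.mpr hu)
    have hGzero : ∀ i, ⟪gradient h x, G x i⟫ = 0 := by
      by_contra hcon
      push_neg at hcon
      obtain ⟨j, hj⟩ := hcon
      set c : ℝ := (-(⟪gradient h x, f x⟫ + h x) + 1) / ⟪gradient h x, G x j⟫ with hc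
      have := hxfail id strictMono_id rfl (fun i => if i = j then c else 0)
      have hsum : ∑ i, ⟪gradient h x, G x i⟫ * (if i = j then c else 0)
          = ⟪gradient h x, G x j⟫ * c := by
        simp [mul_ite, mul_zero]
      rw [hsum, hc, mul_div_cancel₀ _ hj] at this
      simp only [id_eq] at this
      linarith
    refine ⟨x, Metric.infDist_lt_iff hne |>.mpr ?_, hxnC, hGzero, ?_⟩
    · obtain ⟨y, hy, hxy⟩ := Metric.mem_thickening_iff.mp hxD
      exact ⟨y, hy, hxy⟩
    · have := hxfail id strictMono_id rfl 0
      simpa [hGzero] using this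
  choose x hxd hxnC hxG hxf using hseq
  -- compactness: extract convergent subsequence in cthickening 1 C
  have hK : IsCompact (Metric.cthickening 1 C) := hcomp.cthickening
  have hxK : ∀ k, x k ∈ Metric.cthickening 1 C := by
    intro k
    apply Metric.thickening_subset_cthickening (δ := 1)
    refine (Metric.mem_thickening_iff_infDist_lt hne).mpr ?_
    have h1 : (1:ℝ)/(k+1) ≤ 1 := by
      rw [div_le_one (by positivity)]; linarith [Nat.cast_nonneg (α := ℝ) k]
    exact lt_of_lt_of_le (hxd k) h1
  obtain ⟨y, hyK, φ, hφ, hten⟩ := hK.tendsto_subseq hxK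
  -- y ∈ C
  have hdten : Filter.Tendsto (fun k => Metric.infDist (x (φ k)) C)
      Filter.atTop (nhds (Metric.infDist y C)) :=
    ((Metric.continuous_infDist_pt C).tendsto y).comp hten
  have hle : Metric.infDist y C ≤ 0 := by
    refine le_of_tendsto_of_tendsto' hdten
      tendsto_one_div_add_atTop_nhds_zero_nat (fun k => ?_)
    refine le_trans (le_of_lt (hxd (φ k))) ?_
    apply one_div_le_one_div_of_le (by positivity)
    have : (k:ℝ) ≤ (φ k : ℝ) := Nat.cast_le.mpr hφ.le_apply
    linarith
  have hyC : y ∈ C := by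
    have h0 : Metric.infDist y C = 0 := le_antisymm hle (Metric.infDist_nonneg)
    have := (Metric.mem_closure_iff_infDist_zero hne).mpr h0
    rwa [hCclosed.closure_eq] at this
  -- y ∈ frontier C
  have hyF : y ∈ frontier C := by
    rw [frontier_eq_closure_inter_closure, hCclosed.closure_eq]
    refine ⟨hyC, mem_closure_of_tendsto hten ?_⟩
    exact Filter.Eventually.of_forall (fun k => hxnC (φ k))
  -- inner products vanish in the limit
  have hGy : ∀ i, ⟪gradient h y, G y i⟫ = 0 := by
    intro i
    have hcont : Continuous fun z => ⟪gradient h z, G z i⟫ :=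
      hgradcont.inner ((continuous_apply i).comp hGcont)
    have h1 : Filter.Tendsto (fun k => ⟪gradient h (x (φ k)), G (x (φ k)) i⟫)
        Filter.atTop (nhds (⟪gradient h y, G y i⟫)) := (hcont.tendsto y).comp hten
    have h2 : Filter.Tendsto (fun k => ⟪gradient h (x (φ k)), G (x (φ k)) i⟫)
        Filter.atTop (nhds (0:ℝ)) := by
      simp only [hxG]
      exact (tendsto_const_nhds :
        Filter.Tendsto (fun _ : ℕ => (0:ℝ)) Filter.atTop (nhds 0))
    exact tendsto_nhds_unique h1 h2
  have hhy : h y = 0 := hzero y hyF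
  have hfley : ⟪gradient h y, f y⟫ + h y ≤ 0 := by
    have hcont : Continuous fun z => ⟪gradient h z, f z⟫ + h z :=
      (hgradcont.inner hfcont).add hC1.continuous
    have h1 : Filter.Tendsto (fun k => ⟪gradient h (x (φ k)), f (x (φ k))⟫ + h (x (φ k)))
        Filter.atTop (nhds (⟪gradient h y, f y⟫ + h y)) := (hcont.tendsto y).comp hten
    exact le_of_tendsto h1 (Filter.Eventually.of_forall fun k => le_of_lt (hxf (φ k)))
  have hfle : ⟪gradient h y, f y⟫ ≤ 0 := by rw [hhy] at hfley; linarith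
  have hfge : 0 ≤ ⟪gradient h y, f y⟫ := by
    obtain ⟨u, hu⟩ := hcbf y hyC
    have hsum : ∑ i, ⟪gradient h y, G y i⟫ * u i = 0 := by
      simp [hGy]
    rw [hsum, hhy, hα0] at hu
    linarith
  exact ⟨y, hyF, le_antisymm hfle hfge, hGy⟩
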